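/- Let f : ℝ^P → ℝ^N be continuously differentiable with Jacobian J(θ) ∈ ℝ^{N×P}, let Y ∈ ℝ^N and g(θ) = f(θ) − Y, and fix θ₀ ∈ ℝ^P. Let K ≥ 1, R₀ > 0, λ_min > 0, η₀ > 0, let Θ be a symmetric real N×N matrix with vᵀ Θ v ≥ λ_min ‖v‖₂² for all v, and let n > 0 satisfy n ≥ (18 K³ R₀ / λ_min²)². Assume: (i) for all θ, θ̃ in the closed ball B(θ₀, 3KR₀/(λ_min √n)): ‖J(θ) − J(θ̃)‖_F ≤ K √n ‖θ − θ̃‖₂ and ‖J(θ)‖_F ≤ K √n; (ii) ‖g(θ₀)‖₂ ≤ R₀; (iii) ‖Θ − (1/n) J(θ₀) J(θ₀)ᵀ‖_F ≤ λ_min/3. Let θ : [0,∞) → ℝ^P be differentiable with θ(0) = θ₀ and θ′(t) = − (η₀/n) J(θ(t))ᵀ g(θ(t)) for all t ≥ 0. Then for every t ≥ 0: ‖g(θ(t))‖₂ ≤ e^{−η₀ λ_min t/3} R₀, ‖θ(t) − θ₀‖₂ ≤ (3 K R₀/λ_min)(1 − e^{−η₀ λ_min t/3}) n^{−1/2}, and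 ‖(1/n) J(θ₀) J(θ₀)ᵀ − (1/n) J(θ(t)) J(θ(t))ᵀ‖_F ≤ 6 K³ R₀/(λ_min √n). -/

import Mathlib

open Matrix

/-- The Euclidean (ℓ²) norm of a vector in `ℝ^n`. -/
noncomputable def l2norm {n : ℕ} (v : Fin n → ℝ) : ℝ :=
  Real.sqrt (∑ i, v i ^ 2)

/-- The Frobenius norm of a real matrix. -/
noncomputable def frobeniusNorm {m n : ℕ} (A : Matrix (Fin m) (Fin n) ℝ) : ℝ :=
  Real.sqrt (∑ i, ∑ j, A i j ^ 2)

namespace NTKAux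

lemma l2norm_nonneg {n : ℕ} (v : Fin n → ℝ) : 0 ≤ l2norm v := Real.sqrt_nonneg _

lemma l2norm_sq {n : ℕ} (v : Fin n → ℝ) : l2norm v ^ 2 = ∑ i, v i ^ 2 :=
  Real.sq_sqrt (by positivity)

lemma l2norm_le {n : ℕ} {v : Fin n → ℝ} {a : ℝ} (ha : 0 ≤ a)
    (h : ∑ i, v i ^ 2 ≤ a ^ 2) : l2norm v ≤ a := by
  rw [l2norm, show a = Real.sqrt (a ^ 2) from (Real.sqrt_sq ha).symm]
  exact Real.sqrt_le_sqrt h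

lemma l2norm_zero {n : ℕ} : l2norm (0 : Fin n → ℝ) = 0 := by
  simp [l2norm]

lemma l2norm_neg {n : ℕ} (v : Fin n → ℝ) : l2norm (-v) = l2norm v := by
  simp [l2norm]

lemma l2norm_smul {n : ℕ} (a : ℝ) (v : Fin n → ℝ) :
    l2norm (a • v) = |a| * l2norm v := by
  simp only [l2norm, Pi.smul_apply, smul_eq_mul, mul_pow]
  rw [← Finset.mul_sum, Real.sqrt_mul (sq_nonneg a), Real.sqrt_sq_eq_abs]

lemma abs_dot_le {n : ℕ} (v w : Fin n → ℝ) : |v ⬝ᵥ w| ≤ l2norm v * l2norm w := by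
  have h := Finset.sum_mul_sq_le_sq_mul_sq Finset.univ v w
  have : |v ⬝ᵥ w| = Real.sqrt ((∑ i, v i * w i) ^ 2) := by
    rw [Real.sqrt_sq_eq_abs]; rfl
  rw [this, l2norm, l2norm, ← Real.sqrt_mul (by positivity)]
  exact Real.sqrt_le_sqrt h

lemma dot_le {n : ℕ} (v w : Fin n → ℝ) : v ⬝ᵥ w ≤ l2norm v * l2norm w :=
  le_trans (le_abs_self _) (abs_dot_le v w)

lemma dot_self_eq {n : ℕ} (v : Fin n → ℝ) : v ⬝ᵥ v = l2norm v ^ 2 := by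
  rw [l2norm_sq]; simp [dotProduct, sq]

lemma frob_nonneg {m n : ℕ} (A : Matrix (Fin m) (Fin n) ℝ) : 0 ≤ frobeniusNorm A :=
  Real.sqrt_nonneg _

lemma frob_sq {m n : ℕ} (A : Matrix (Fin m) (Fin n) ℝ) :
    frobeniusNorm A ^ 2 = ∑ i, ∑ j, A i j ^ 2 := Real.sq_sqrt (by positivity)

lemma frob_le {m n : ℕ} {A : Matrix (Fin m) (Fin n) ℝ} {a : ℝ} (ha : 0 ≤ a)
    (h : ∑ i, ∑ j, A i j ^ 2 ≤ a ^ 2) : frobeniusNorm A ≤ a := by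
  rw [frobeniusNorm, show a = Real.sqrt (a ^ 2) from (Real.sqrt_sq ha).symm]
  exact Real.sqrt_le_sqrt h

lemma frob_transpose {m n : ℕ} (A : Matrix (Fin m) (Fin n) ℝ) :
    frobeniusNorm Aᵀ = frobeniusNorm A := by
  rw [frobeniusNorm, frobeniusNorm, Finset.sum_comm]
  rfl

lemma l2norm_mulVec_le {m n : ℕ} (A : Matrix (Fin m) (Fin n) ℝ) (v : Fin n → ℝ) :
    l2norm (A.mulVec v) ≤ frobeniusNorm A * l2norm v := by
  refine l2norm_le (mul_nonneg (frob_nonneg A) (l2norm_nonneg v)) ?_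
  rw [mul_pow, frob_sq, l2norm_sq, Finset.sum_mul]
  refine Finset.sum_le_sum fun i _ => ?_
  exact Finset.sum_mul_sq_le_sq_mul_sq Finset.univ (A i) v

lemma frob_mul_le {m n p : ℕ} (A : Matrix (Fin m) (Fin n) ℝ) (B : Matrix (Fin n) (Fin p) ℝ) :
    frobeniusNorm (A * B) ≤ frobeniusNorm A * frobeniusNorm B := by
  refine frob_le (mul_nonneg (frob_nonneg A) (frob_nonneg B)) ?_
  rw [mul_pow, frob_sq, frob_sq, Finset.sum_mul]
  refine Finset.sum_le_sum fun i _ => ?_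
  calc ∑ j, (A * B) i j ^ 2 ≤ ∑ j, (∑ k, A i k ^ 2) * ∑ k, B k j ^ 2 := by
        refine Finset.sum_le_sum fun j _ => ?_
        exact Finset.sum_mul_sq_le_sq_mul_sq Finset.univ (A i) (fun k => B k j)
    _ = (∑ k, A i k ^ 2) * ∑ j, ∑ k, B k j ^ 2 := by rw [Finset.mul_sum]
    _ = (∑ k, A i k ^ 2) * ∑ k, ∑ j, B k j ^ 2 := by rw [Finset.sum_comm]

lemma frob_add_le {m n : ℕ} (A B : Matrix (Fin m) (Fin n) ℝ) :
    frobeniusNorm (A + B) ≤ frobeniusNorm A + frobeniusNorm B := by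
  refine frob_le (add_nonneg (frob_nonneg A) (frob_nonneg B)) ?_
  have hAB : ∑ i, ∑ j, A i j * B i j ≤ frobeniusNorm A * frobeniusNorm B := by
    have h1 : (∑ i, ∑ j, A i j * B i j) ^ 2 ≤
        (∑ i, ∑ j, A i j ^ 2) * ∑ i, ∑ j, B i j ^ 2 := by
      have := Finset.sum_mul_sq_le_sq_mul_sq Finset.univ
        (fun p : Fin m × Fin n => A p.1 p.2) (fun p : Fin m × Fin n => B p.1 p.2)
      simpa [Fintype.sum_prod_type] using this
    have h2 : |∑ i, ∑ j, A i j * B i j| ≤ frobeniusNorm A * frobeniusNorm B := by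
      rw [← Real.sqrt_sq_eq_abs, frobeniusNorm, frobeniusNorm,
        ← Real.sqrt_mul (by positivity)]
      exact Real.sqrt_le_sqrt h1
    exact le_trans (le_abs_self _) h2
  have expand : ∑ i, ∑ j, (A + B) i j ^ 2 =
      (∑ i, ∑ j, A i j ^ 2) + 2 * (∑ i, ∑ j, A i j * B i j) + ∑ i, ∑ j, B i j ^ 2 := by
    simp only [Matrix.add_apply, Finset.mul_sum, ← Finset.sum_add_distrib]
    exact Finset.sum_congr rfl fun i _ => Finset.sum_congr rfl fun j _ => by ring
  rw [expand]
  have hA := frob_sq A; have hB := frob_sq B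
  nlinarith [frob_nonneg A, frob_nonneg B]

lemma frob_smul {m n : ℕ} (a : ℝ) (A : Matrix (Fin m) (Fin n) ℝ) :
    frobeniusNorm (a • A) = |a| * frobeniusNorm A := by
  simp only [frobeniusNorm, Matrix.smul_apply, smul_eq_mul, mul_pow]
  rw [show ∑ i, ∑ j, a ^ 2 * A i j ^ 2 = a ^ 2 * ∑ i, ∑ j, A i j ^ 2 by
    rw [Finset.mul_sum]; exact Finset.sum_congr rfl fun i _ => (Finset.mul_sum _ _ _).symm]
  rw [Real.sqrt_mul (sq_nonneg a), Real.sqrt_sq_eq_abs]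

lemma frob_sub_le {m n : ℕ} (A B C : Matrix (Fin m) (Fin n) ℝ) :
    frobeniusNorm (A - C) ≤ frobeniusNorm (A - B) + frobeniusNorm (B - C) := by
  rw [← sub_add_sub_cancel A B C]; exact frob_add_le _ _

lemma abs_quad_le {n : ℕ} (A : Matrix (Fin n) (Fin n) ℝ) (v : Fin n → ℝ) :
    |v ⬝ᵥ A.mulVec v| ≤ frobeniusNorm A * l2norm v ^ 2 := by
  calc |v ⬝ᵥ A.mulVec v| ≤ l2norm v * l2norm (A.mulVec v) := abs_dot_le _ _
    _ ≤ l2norm v * (frobeniusNorm A * l2norm v) :=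
        mul_le_mul_of_nonneg_left (l2norm_mulVec_le A v) (l2norm_nonneg v)
    _ = frobeniusNorm A * l2norm v ^ 2 := by ring

lemma l2norm_continuous {n : ℕ} : Continuous fun v : Fin n → ℝ => l2norm v := by
  unfold l2norm
  exact Real.continuous_sqrt.comp (by continuity)

end NTKAux

set_option maxHeartbeats 1000000

/-- Global convergence of gradient flow and stability of the empirical
neural tangent kernel `Θ̂_t = (1/n) J(θ(t)) J(θ(t))ᵀ` for a wide network, under local
Lipschitzness of the Jacobian and closeness of the initial empirical kernel to the analytic
kernel `Θ`. -/
theorem gradient_flow_convergence_and_ntk_stability {N P : ℕ}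
    (f : (Fin P → ℝ) → (Fin N → ℝ))
    (J : (Fin P → ℝ) → Matrix (Fin N) (Fin P) ℝ)
    (hf : ∀ θ, HasFDerivAt f ((J θ).mulVecLin.toContinuousLinearMap) θ)
    (hJcont : Continuous J)
    (Y : Fin N → ℝ) (g : (Fin P → ℝ) → (Fin N → ℝ)) (hg : ∀ θ, g θ = f θ - Y)
    (θ₀ : Fin P → ℝ)
    (K R₀ lmin : ℝ) (hK : 1 ≤ K) (hR₀ : 0 < R₀) (hlmin : 0 < lmin)
    (η₀ : ℝ) (hη₀pos : 0 < η₀)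
    (Θ : Matrix (Fin N) (Fin N) ℝ) (hΘsym : Θ.IsSymm)
    (hΘlb : ∀ v : Fin N → ℝ, lmin * l2norm v ^ 2 ≤ v ⬝ᵥ Θ.mulVec v)
    (n : ℝ) (hn : 0 < n) (hnbig : (18 * K ^ 3 * R₀ / lmin ^ 2) ^ 2 ≤ n)
    (hJlip : ∀ θ θ' : Fin P → ℝ,
      l2norm (θ - θ₀) ≤ 3 * K * R₀ / (lmin * Real.sqrt n) →
      l2norm (θ' - θ₀) ≤ 3 * K * R₀ / (lmin * Real.sqrt n) →
      frobeniusNorm (J θ - J θ') ≤ K * Real.sqrt n * l2norm (θ - θ') ∧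
        frobeniusNorm (J θ) ≤ K * Real.sqrt n)
    (hg₀ : l2norm (g θ₀) ≤ R₀)
    (hΘclose : frobeniusNorm (Θ - (1 / n) • (J θ₀ * (J θ₀)ᵀ)) ≤ lmin / 3)
    (θf : ℝ → (Fin P → ℝ)) (hθf0 : θf 0 = θ₀)
    (hflow : ∀ t : ℝ, 0 ≤ t →
      HasDerivAt θf (-((η₀ / n) • ((J (θf t))ᵀ.mulVec (g (θf t))))) t) :
    ∀ t : ℝ, 0 ≤ t →
      l2norm (g (θf t)) ≤ Real.exp (-(η₀ * lmin * t / 3)) * R₀ ∧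
      l2norm (θf t - θ₀) ≤
        (3 * K * R₀ / lmin) * (1 - Real.exp (-(η₀ * lmin * t / 3))) / Real.sqrt n ∧
      frobeniusNorm ((1 / n) • (J θ₀ * (J θ₀)ᵀ) - (1 / n) • (J (θf t) * (J (θf t))ᵀ)) ≤
        6 * K ^ 3 * R₀ / (lmin * Real.sqrt n) := by
  have hKpos : (0:ℝ) < K := lt_of_lt_of_le one_pos hK
  set sn := Real.sqrt n with hsn_def
  have hsn : 0 < sn := Real.sqrt_pos.mpr hn
  have hn_eq : sn * sn = n := Real.mul_self_sqrt hn.le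
  have hsnbig : 18 * K ^ 3 * R₀ / lmin ^ 2 ≤ sn := by
    have h0 : (0:ℝ) ≤ 18 * K ^ 3 * R₀ / lmin ^ 2 := by positivity
    calc 18 * K ^ 3 * R₀ / lmin ^ 2
        = Real.sqrt ((18 * K ^ 3 * R₀ / lmin ^ 2) ^ 2) := (Real.sqrt_sq h0).symm
      _ ≤ sn := Real.sqrt_le_sqrt hnbig
  set ρ : ℝ := 3 * K * R₀ / (lmin * sn) with hρ_def
  have hρpos : 0 < ρ := by positivity
  set c : ℝ := η₀ * lmin / 3 with hc_def
  have hcpos : 0 < c := by rw [hc_def]; positivity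
  clear_value sn ρ c
  -- Jacobian bounds in the ball
  have hball0 : l2norm (θ₀ - θ₀) ≤ ρ := by
    rw [sub_self, NTKAux.l2norm_zero]; exact hρpos.le
  have hJ0 : frobeniusNorm (J θ₀) ≤ K * sn := (hJlip θ₀ θ₀ hball0 hball0).2
  have hJbd : ∀ θ, l2norm (θ - θ₀) ≤ ρ → frobeniusNorm (J θ) ≤ K * sn :=
    fun θ h => (hJlip θ θ₀ h hball0).2
  have hJdiff : ∀ θ, l2norm (θ - θ₀) ≤ ρ →
      frobeniusNorm (J θ₀ - J θ) ≤ K * sn * l2norm (θ - θ₀) := by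
    intro θ h
    have h2 := (hJlip θ₀ θ hball0 h).1
    rwa [show θ₀ - θ = -(θ - θ₀) by abel, NTKAux.l2norm_neg] at h2
  -- kernel difference bound
  have h18 : 18 * K ^ 3 * R₀ ≤ lmin ^ 2 * sn := by
    have := (div_le_iff₀ (by positivity : (0:ℝ) < lmin ^ 2)).mp hsnbig
    linarith
  have hkerdiff : ∀ θ, l2norm (θ - θ₀) ≤ ρ →
      frobeniusNorm ((1 / n) • (J θ₀ * (J θ₀)ᵀ) - (1 / n) • (J θ * (J θ)ᵀ)) ≤
        2 * K ^ 2 * l2norm (θ - θ₀) := by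
    intro θ hθ
    have hl2nn := NTKAux.l2norm_nonneg (θ - θ₀)
    have e1 : (1 / n) • (J θ₀ * (J θ₀)ᵀ) - (1 / n) • (J θ * (J θ)ᵀ)
        = (1 / n) • ((J θ₀) * ((J θ₀) - (J θ))ᵀ + ((J θ₀) - (J θ)) * (J θ)ᵀ) := by
      rw [← smul_sub]; congr 1
      rw [Matrix.transpose_sub, Matrix.mul_sub, Matrix.sub_mul]; abel
    rw [e1, NTKAux.frob_smul, abs_of_pos (by positivity : (0:ℝ) < 1 / n)]
    have h1 : frobeniusNorm ((J θ₀) * ((J θ₀) - (J θ))ᵀ)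
        ≤ (K * sn) * (K * sn * l2norm (θ - θ₀)) := by
      refine le_trans (NTKAux.frob_mul_le _ _) ?_
      refine mul_le_mul hJ0 ?_ (NTKAux.frob_nonneg _) (by positivity)
      rw [NTKAux.frob_transpose]; exact hJdiff θ hθ
    have h2 : frobeniusNorm (((J θ₀) - (J θ)) * (J θ)ᵀ)
        ≤ (K * sn * l2norm (θ - θ₀)) * (K * sn) := by
      refine le_trans (NTKAux.frob_mul_le _ _) ?_
      refine mul_le_mul (hJdiff θ hθ) ?_ (NTKAux.frob_nonneg _) (by positivity)
      rw [NTKAux.frob_transpose]; exact hJbd θ hθ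
    have tri := NTKAux.frob_add_le ((J θ₀) * ((J θ₀) - (J θ))ᵀ) (((J θ₀) - (J θ)) * (J θ)ᵀ)
    have hsum : frobeniusNorm ((J θ₀) * ((J θ₀) - (J θ))ᵀ + ((J θ₀) - (J θ)) * (J θ)ᵀ)
        ≤ 2 * K ^ 2 * n * l2norm (θ - θ₀) := by
      rw [← hn_eq]
      calc _ ≤ (K * sn) * (K * sn * l2norm (θ - θ₀)) +
            (K * sn * l2norm (θ - θ₀)) * (K * sn) := le_trans tri (add_le_add h1 h2)
        _ = 2 * K ^ 2 * (sn * sn) * l2norm (θ - θ₀) := by ring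
    calc 1 / n * frobeniusNorm ((J θ₀) * ((J θ₀) - (J θ))ᵀ + ((J θ₀) - (J θ)) * (J θ)ᵀ)
        ≤ 1 / n * (2 * K ^ 2 * n * l2norm (θ - θ₀)) :=
          mul_le_mul_of_nonneg_left hsum (by positivity)
      _ = 2 * K ^ 2 * l2norm (θ - θ₀) := by field_simp
  have hρK : 2 * K ^ 2 * ρ ≤ lmin / 3 := by
    rw [hρ_def,
      show (2:ℝ) * K ^ 2 * (3 * K * R₀ / (lmin * sn)) = 6 * K ^ 3 * R₀ / (lmin * sn) by ring,
      div_le_div_iff₀ (by positivity) (by norm_num : (0:ℝ) < 3)]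
    nlinarith [h18]
  -- quadratic form lower bound in the ball
  have hquad : ∀ θ, l2norm (θ - θ₀) ≤ ρ → ∀ v : Fin N → ℝ,
      lmin / 3 * l2norm v ^ 2 ≤ v ⬝ᵥ ((1 / n) • (J θ * (J θ)ᵀ)).mulVec v := by
    intro θ hθ v
    have hd : v ⬝ᵥ Θ.mulVec v - v ⬝ᵥ ((1 / n) • (J θ * (J θ)ᵀ)).mulVec v
        = v ⬝ᵥ (Θ - (1 / n) • (J θ * (J θ)ᵀ)).mulVec v := by
      rw [Matrix.sub_mulVec, dotProduct_sub]
    have htri : frobeniusNorm (Θ - (1 / n) • (J θ * (J θ)ᵀ)) ≤ 2 * lmin / 3 := by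
      refine le_trans (NTKAux.frob_sub_le Θ ((1 / n) • (J θ₀ * (J θ₀)ᵀ)) _) ?_
      have hk := le_trans (hkerdiff θ hθ)
        (mul_le_mul_of_nonneg_left hθ (by positivity : (0:ℝ) ≤ 2 * K ^ 2))
      linarith [hΘclose, le_trans hk hρK]
    have habs := le_trans (NTKAux.abs_quad_le (Θ - (1 / n) • (J θ * (J θ)ᵀ)) v)
      (mul_le_mul_of_nonneg_right htri (sq_nonneg (l2norm v)))
    have h1 := hΘlb v
    have h2 : v ⬝ᵥ Θ.mulVec v - v ⬝ᵥ ((1 / n) • (J θ * (J θ)ᵀ)).mulVec v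
        ≤ 2 * lmin / 3 * l2norm v ^ 2 := by
      rw [hd]; exact le_trans (le_abs_self _) habs
    nlinarith [sq_nonneg (l2norm v)]
  -- derivative of g ∘ θf
  have hGderiv : ∀ t : ℝ, 0 ≤ t → HasDerivAt (fun s => g (θf s))
      ((-(η₀ / n)) • ((J (θf t) * (J (θf t))ᵀ).mulVec (g (θf t)))) t := by
    intro t ht
    have h1 := (hf (θf t)).comp_hasDerivAt t (hflow t ht)
    have hval : ((J (θf t)).mulVecLin.toContinuousLinearMap :
        (Fin P → ℝ) →L[ℝ] (Fin N → ℝ)) (-((η₀ / n) • ((J (θf t))ᵀ.mulVec (g (θf t)))))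
        = (-(η₀ / n)) • ((J (θf t) * (J (θf t))ᵀ).mulVec (g (θf t))) := by
      simp only [LinearMap.coe_toContinuousLinearMap', Matrix.mulVecLin_apply]
      rw [Matrix.mulVec_neg, Matrix.mulVec_smul, Matrix.mulVec_mulVec, neg_smul]
    have h2 := h1.sub_const Y
    have hGeq : (fun s => g (θf s)) = fun s => f (θf s) - Y := by
      funext s; rw [hg]
    rw [hGeq, ← hval]
    exact h2
  -- the scalar energy u
  set u : ℝ → ℝ := fun s => ∑ i, (g (θf s) i) ^ 2 with hu_def
  have hu_nonneg : ∀ s, 0 ≤ u s := fun s => Finset.sum_nonneg fun i _ => sq_nonneg _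
  have hu_eq : ∀ s, u s = l2norm (g (θf s)) ^ 2 := fun s => (NTKAux.l2norm_sq _).symm
  have huderiv : ∀ t : ℝ, 0 ≤ t → HasDerivAt u
      (-(2 * η₀ / n) * (g (θf t) ⬝ᵥ (J (θf t) * (J (θf t))ᵀ).mulVec (g (θf t)))) t := by
    intro t ht
    have hGd := hGderiv t ht
    have hcoord : ∀ i, HasDerivAt (fun s => g (θf s) i)
        (((-(η₀ / n)) • ((J (θf t) * (J (θf t))ᵀ).mulVec (g (θf t)))) i) t :=
      fun i => hasDerivAt_pi.mp hGd i
    have hsq : ∀ i, HasDerivAt (fun s => (g (θf s) i) ^ 2)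
        (2 * g (θf t) i * (((-(η₀ / n)) • ((J (θf t) * (J (θf t))ᵀ).mulVec (g (θf t)))) i)) t :=
      fun i => by simpa using (hcoord i).fun_pow 2
    have hsum := HasDerivAt.fun_sum (fun i (_ : i ∈ Finset.univ) => hsq i)
    refine hsum.congr_deriv ?_
    simp only [dotProduct, Pi.smul_apply, smul_eq_mul, Finset.mul_sum]
    exact Finset.sum_congr rfl fun i _ => by ring
  -- the quadratic form bound specialized along the flow
  have hQ : ∀ t : ℝ, 0 ≤ t → l2norm (θf t - θ₀) ≤ ρ →
      n * (lmin / 3) * u t ≤ g (θf t) ⬝ᵥ (J (θf t) * (J (θf t))ᵀ).mulVec (g (θf t)) := by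
    intro t ht hball
    have h := hquad (θf t) hball (g (θf t))
    rw [Matrix.smul_mulVec, dotProduct_smul, smul_eq_mul] at h
    have h2 := mul_le_mul_of_nonneg_left h hn.le
    calc n * (lmin / 3) * u t
        = n * (lmin / 3 * l2norm (g (θf t)) ^ 2) := by rw [hu_eq]; ring
      _ ≤ n * (1 / n * (g (θf t) ⬝ᵥ (J (θf t) * (J (θf t))ᵀ).mulVec (g (θf t)))) := h2
      _ = g (θf t) ⬝ᵥ (J (θf t) * (J (θf t))ᵀ).mulVec (g (θf t)) := by
          field_simp
  -- exp auxiliary derivative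
  have hexp : ∀ a x : ℝ, HasDerivAt (fun s : ℝ => Real.exp (a * s)) (Real.exp (a * x) * a) x := by
    intro a x
    have h := ((hasDerivAt_id x).const_mul a).exp
    simpa using h
  -- ===== key lemma =====
  have key : ∀ T : ℝ, 0 ≤ T → (∀ s, 0 ≤ s → s < T → l2norm (θf s - θ₀) ≤ ρ) →
      (∀ s, 0 ≤ s → s ≤ T → l2norm (g (θf s)) ≤ Real.exp (-(c * s)) * R₀) ∧
        l2norm (θf T - θ₀) ≤ ρ * (1 - Real.exp (-(c * T))) := by
    intro T hT hball
    -- Part A : decay of the residual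
    have partA : ∀ s, 0 ≤ s → s ≤ T → l2norm (g (θf s)) ≤ Real.exp (-(c * s)) * R₀ := by
      intro s hs hsT
      set F : ℝ → ℝ := fun x => u x * Real.exp (2 * c * x) with hF_def
      have hFd : ∀ x : ℝ, 0 ≤ x → HasDerivAt F
          (-(2 * η₀ / n) * (g (θf x) ⬝ᵥ (J (θf x) * (J (θf x))ᵀ).mulVec (g (θf x)))
            * Real.exp (2 * c * x) + u x * (Real.exp (2 * c * x) * (2 * c))) x :=
        fun x hx => (huderiv x hx).mul (hexp (2 * c) x)
      have hmono : AntitoneOn F (Set.Icc 0 T) := by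
        refine antitoneOn_of_deriv_nonpos (convex_Icc 0 T)
          (fun x hx => (hFd x hx.1).continuousAt.continuousWithinAt) ?_ ?_
        · rw [interior_Icc]
          exact fun x hx => (hFd x hx.1.le).differentiableAt.differentiableWithinAt
        · rw [interior_Icc]
          intro x hx
          rw [(hFd x hx.1.le).deriv]
          have hQx := hQ x hx.1.le (hball x hx.1.le hx.2)
          have h1 : 2 * η₀ / n * (n * (lmin / 3) * u x) = 2 * c * u x := by
            rw [hc_def]; field_simp
          have h2 : 2 * c * u x ≤ 2 * η₀ / n *
              (g (θf x) ⬝ᵥ (J (θf x) * (J (θf x))ᵀ).mulVec (g (θf x))) := by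
            rw [← h1]; exact mul_le_mul_of_nonneg_left hQx (by positivity)
          have h3 : (-(2 * η₀ / n) *
              (g (θf x) ⬝ᵥ (J (θf x) * (J (θf x))ᵀ).mulVec (g (θf x))) + 2 * c * u x)
              * Real.exp (2 * c * x) ≤ 0 :=
            mul_nonpos_of_nonpos_of_nonneg (by linarith) (Real.exp_pos _).le
          calc -(2 * η₀ / n) *
              (g (θf x) ⬝ᵥ (J (θf x) * (J (θf x))ᵀ).mulVec (g (θf x)))
                * Real.exp (2 * c * x) + u x * (Real.exp (2 * c * x) * (2 * c))
              = (-(2 * η₀ / n) *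
                (g (θf x) ⬝ᵥ (J (θf x) * (J (θf x))ᵀ).mulVec (g (θf x))) + 2 * c * u x)
                * Real.exp (2 * c * x) := by ring
            _ ≤ 0 := h3
      have hFle : F s ≤ F 0 := hmono (Set.left_mem_Icc.mpr hT) ⟨hs, hsT⟩ hs
      have hF0 : F 0 ≤ R₀ ^ 2 := by
        rw [hF_def]
        simp only [mul_zero, Real.exp_zero, mul_one]
        rw [hu_eq 0, hθf0]
        exact pow_le_pow_left₀ (NTKAux.l2norm_nonneg _) hg₀ 2
      have hexp2 : Real.exp (-(c * s)) ^ 2 * Real.exp (2 * c * s) = 1 := by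
        rw [sq, ← Real.exp_add, ← Real.exp_add,
          show -(c * s) + -(c * s) + 2 * c * s = 0 by ring, Real.exp_zero]
      have hus : u s ≤ (Real.exp (-(c * s)) * R₀) ^ 2 := by
        have hh : u s * Real.exp (2 * c * s)
            ≤ (Real.exp (-(c * s)) * R₀) ^ 2 * Real.exp (2 * c * s) := by
          rw [show (Real.exp (-(c * s)) * R₀) ^ 2 * Real.exp (2 * c * s)
            = (Real.exp (-(c * s)) ^ 2 * Real.exp (2 * c * s)) * R₀ ^ 2 by ring, hexp2,
            one_mul]
          exact le_trans hFle hF0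
        exact le_of_mul_le_mul_right hh (Real.exp_pos _)
      exact NTKAux.l2norm_le (by positivity) hus
    refine ⟨partA, ?_⟩
    -- Part B : displacement bound
    set D : Fin P → ℝ := θf T - θ₀ with hD_def
    set d : ℝ := l2norm D with hd_def
    have hdnn : 0 ≤ d := NTKAux.l2norm_nonneg _
    have hexpT : 0 ≤ 1 - Real.exp (-(c * T)) := by
      have : Real.exp (-(c * T)) ≤ 1 := Real.exp_le_one_iff.mpr (by nlinarith)
      linarith
    set ψ : ℝ → ℝ := fun x => D ⬝ᵥ (θf x - θ₀) - d * ρ * (1 - Real.exp (-(c * x)))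
      with hψ_def
    have hψd : ∀ x : ℝ, 0 ≤ x → HasDerivAt ψ
        (D ⬝ᵥ (-((η₀ / n) • ((J (θf x))ᵀ.mulVec (g (θf x)))))
          - d * ρ * (0 - Real.exp (-(c * x)) * -c)) x := by
      intro x hx
      have hdot : HasDerivAt (fun s => D ⬝ᵥ (θf s - θ₀))
          (D ⬝ᵥ (-((η₀ / n) • ((J (θf x))ᵀ.mulVec (g (θf x)))))) x := by
        have hθd := hflow x hx
        have hcoord : ∀ i, HasDerivAt (fun s => θf s i)
            ((-((η₀ / n) • ((J (θf x))ᵀ.mulVec (g (θf x))))) i) x :=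
          fun i => hasDerivAt_pi.mp hθd i
        have hsum := HasDerivAt.fun_sum
          (fun i (_ : i ∈ Finset.univ) => ((hcoord i).sub_const (θ₀ i)).const_mul (D i))
        simp only [dotProduct, Pi.sub_apply]
        exact hsum
      have hexp' : HasDerivAt (fun s : ℝ => 1 - Real.exp (-(c * s)))
          (0 - Real.exp (-(c * x)) * -c) x := by
        have h1 : HasDerivAt (fun s : ℝ => Real.exp (-(c * s))) (Real.exp (-(c * x)) * -c) x := by
          have := hexp (-c) x
          simpa [neg_mul] using this
        exact (hasDerivAt_const x (1:ℝ)).sub h1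
      exact hdot.sub (hexp'.const_mul (d * ρ))
    have hψmono : AntitoneOn ψ (Set.Icc 0 T) := by
      refine antitoneOn_of_deriv_nonpos (convex_Icc 0 T)
        (fun x hx => (hψd x hx.1).continuousAt.continuousWithinAt) ?_ ?_
      · rw [interior_Icc]
        exact fun x hx => (hψd x hx.1.le).differentiableAt.differentiableWithinAt
      · rw [interior_Icc]
        intro x hx
        rw [(hψd x hx.1.le).deriv]
        have hballx := hball x hx.1.le hx.2
        have hgx := partA x hx.1.le hx.2.le
        -- bound |D ⬝ᵥ θf'|
        have hl2' : l2norm (-((η₀ / n) • ((J (θf x))ᵀ.mulVec (g (θf x)))))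
            ≤ ρ * c * Real.exp (-(c * x)) := by
          rw [NTKAux.l2norm_neg, NTKAux.l2norm_smul,
            abs_of_pos (by positivity : (0:ℝ) < η₀ / n)]
          have hb1 : l2norm ((J (θf x))ᵀ.mulVec (g (θf x)))
              ≤ (K * sn) * (Real.exp (-(c * x)) * R₀) := by
            refine le_trans (NTKAux.l2norm_mulVec_le _ _) ?_
            rw [NTKAux.frob_transpose]
            exact mul_le_mul (hJbd _ hballx) hgx (NTKAux.l2norm_nonneg _) (by positivity)
          calc η₀ / n * l2norm ((J (θf x))ᵀ.mulVec (g (θf x)))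
              ≤ η₀ / n * ((K * sn) * (Real.exp (-(c * x)) * R₀)) :=
                mul_le_mul_of_nonneg_left hb1 (by positivity)
            _ = ρ * c * Real.exp (-(c * x)) := by
                rw [hρ_def, hc_def, ← hn_eq]; field_simp
        have hdot_le : D ⬝ᵥ (-((η₀ / n) • ((J (θf x))ᵀ.mulVec (g (θf x)))))
            ≤ d * (ρ * c * Real.exp (-(c * x))) := by
          refine le_trans (NTKAux.dot_le _ _) ?_
          exact mul_le_mul_of_nonneg_left hl2' hdnn
        have : d * ρ * (0 - Real.exp (-(c * x)) * -c) = d * (ρ * c * Real.exp (-(c * x))) := by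
          ring
        linarith [hdot_le, this.ge, this.le]
      -- end deriv nonpos
    have hψT : ψ T ≤ ψ 0 := hψmono (Set.left_mem_Icc.mpr hT) (Set.right_mem_Icc.mpr hT) hT
    have hψ0 : ψ 0 = 0 := by
      rw [hψ_def]
      simp [hθf0, Real.exp_zero]
    have hψTval : ψ T = d ^ 2 - d * ρ * (1 - Real.exp (-(c * T))) := by
      rw [hψ_def]
      simp only [← hD_def]
      rw [NTKAux.dot_self_eq, hd_def]
    have hfin : d ^ 2 ≤ d * (ρ * (1 - Real.exp (-(c * T)))) := by
      rw [hψTval, hψ0] at hψT; nlinarith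
    rcases hdnn.eq_or_lt with h0 | hdpos
    · rw [← h0]
      exact mul_nonneg hρpos.le hexpT
    · have : d * d ≤ d * (ρ * (1 - Real.exp (-(c * T)))) := by rwa [← sq]
      exact le_of_mul_le_mul_left this hdpos
  -- ===== no escape =====
  have noesc : ∀ t, 0 ≤ t → l2norm (θf t - θ₀) < ρ := by
    by_contra hcon
    push_neg at hcon
    obtain ⟨t₀, ht₀, hbad⟩ := hcon
    set E : Set ℝ := {t : ℝ | 0 ≤ t ∧ ρ ≤ l2norm (θf t - θ₀)} with hE_def
    have hEne : E.Nonempty := ⟨t₀, ht₀, hbad⟩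
    have hEbdd : BddBelow E := ⟨0, fun x hx => hx.1⟩
    set T := sInf E with hT_def
    have hT0 : 0 ≤ T := le_csInf hEne fun x hx => hx.1
    have hTlb : ∀ e ∈ E, T ≤ e := fun e he => csInf_le hEbdd he
    have hballT : ∀ s, 0 ≤ s → s < T → l2norm (θf s - θ₀) ≤ ρ := by
      intro s hs hsT
      by_contra hle
      push_neg at hle
      exact absurd (hTlb s ⟨hs, hle.le⟩) (not_le.mpr hsT)
    have hTE : ρ ≤ l2norm (θf T - θ₀) := by
      by_contra hlt
      push_neg at hlt
      have hcont : ContinuousAt (fun s => l2norm (θf s - θ₀)) T := by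
        have hθc : ContinuousAt θf T := (hflow T hT0).continuousAt
        exact (NTKAux.l2norm_continuous.continuousAt).comp (hθc.sub continuousAt_const)
      have hmem : (fun s => l2norm (θf s - θ₀)) ⁻¹' Set.Iio ρ ∈ nhds T :=
        hcont.preimage_mem_nhds (Iio_mem_nhds hlt)
      obtain ⟨δ, hδpos, hδ⟩ := Metric.mem_nhds_iff.mp hmem
      have hlb : ∀ e ∈ E, T + δ / 2 ≤ e := by
        intro e he
        by_contra hlt2
        push_neg at hlt2
        have heball : e ∈ Metric.ball T δ := by
          rw [Metric.mem_ball, Real.dist_eq, abs_lt]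
          constructor <;> [linarith [hTlb e he]; linarith]
        exact absurd (hδ heball) (not_lt.mpr he.2)
      have := le_csInf hEne hlb
      rw [← hT_def] at this
      linarith
    have hkey := (key T hT0 hballT).2
    nlinarith [Real.exp_pos (-(c * T)), hρpos]
  -- ===== final assembly =====
  intro t ht
  have hball : ∀ s, 0 ≤ s → s < t → l2norm (θf s - θ₀) ≤ ρ := fun s hs _ => (noesc s hs).le
  obtain ⟨hA, hB⟩ := key t ht hball
  have he : -(η₀ * lmin * t / 3) = -(c * t) := by rw [hc_def]; ring
  refine ⟨?_, ?_, ?_⟩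
  · rw [he]; exact hA t ht le_rfl
  · rw [he]
    have heq : (3 * K * R₀ / lmin) * (1 - Real.exp (-(c * t))) / sn
        = ρ * (1 - Real.exp (-(c * t))) := by
      rw [hρ_def]; ring
    rw [heq]; exact hB
  · have h3 := hkerdiff (θf t) (noesc t ht).le
    calc frobeniusNorm ((1 / n) • (J θ₀ * (J θ₀)ᵀ) - (1 / n) • (J (θf t) * (J (θf t))ᵀ))
        ≤ 2 * K ^ 2 * l2norm (θf t - θ₀) := h3
      _ ≤ 2 * K ^ 2 * ρ := mul_le_mul_of_nonneg_left (noesc t ht).le (by positivity)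
      _ = 6 * K ^ 3 * R₀ / (lmin * sn) := by rw [hρ_def]; ring
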